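/- Let g₁,…,g_m be non-decreasing, right-continuous, unbounded functions on [0,∞) with gᵢ(0)=0 and gᵢ(t)>0 for t>0. Define f := Σᵢ gᵢ⁻¹, κ := f⁻¹, γᵢ := gᵢ⁻¹ ∘̃ κ. Then for every s ≥ 0 and every i ∈ [m], κ(s) ∈ [gᵢ(γᵢ(s)−), gᵢ(γᵢ(s))]. In particular, if each gᵢ is continuous at γᵢ(s), then g₁(γ₁(s)) = g₂(γ₂(s)) = ⋯ = g_m(γ_m(s)) = κ(s). -/

import Mathlib

open Set Function Filter Topology

/-- Right-continuous generalized inverse: `h⁻¹(s) = inf {u > 0 : h(u) > s}`. -/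
noncomputable def ginv (h : ℝ → ℝ) (s : ℝ) : ℝ := sInf {u : ℝ | 0 < u ∧ s < h u}

/-- Left limit of a function monotone on `[0,∞)`, with the convention `h(0−) = h(0)`. -/
noncomputable def llim (h : ℝ → ℝ) (u : ℝ) : ℝ :=
  if u ≤ 0 then h 0 else sSup (h '' Set.Ico 0 u)

/-- Right-continuity on `[0,∞)`. -/
def RightCts (h : ℝ → ℝ) : Prop := ∀ x : ℝ, 0 ≤ x → ContinuousWithinAt h (Set.Ici x) x

/-- The class `D₀↑↑(ℝ₊)`: non-decreasing, right-continuous, `h 0 = 0`, strictly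
positive on `(0,∞)`, and unbounded. -/
def Dpp (h : ℝ → ℝ) : Prop :=
  MonotoneOn h (Set.Ici 0) ∧ RightCts h ∧ h 0 = 0 ∧ (∀ t : ℝ, 0 < t → 0 < h t) ∧
    (∀ M : ℝ, ∃ t : ℝ, 0 ≤ t ∧ M < h t)

/-- `h` jumps at `u`: `h(u−) < h(u)`. -/
noncomputable def JumpAt (h : ℝ → ℝ) (u : ℝ) : Prop := llim h u < h u

/-- Compatibility condition (H1): whenever `g` jumps at `u`, the level set
`{r ≥ 0 : κ r = u}` has positive length. -/
def H1 (g κ : ℝ → ℝ) : Prop :=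
  ∀ u : ℝ, JumpAt g u → ∃ r₁ r₂ : ℝ, 0 ≤ r₁ ∧ r₁ < r₂ ∧ κ r₁ = u ∧ κ r₂ = u

/-- Compatibility condition (H2): whenever `κ(s−) < κ(s)`, `g(κ(s−)) = g(κ(s)−)`. -/
def H2 (g κ : ℝ → ℝ) : Prop :=
  ∀ s : ℝ, 0 ≤ s → llim κ s < κ s → g (llim κ s) = llim g (κ s)

-- Smooth composition `g ∘̃ κ`: equal to `g ∘ κ` outside the intervals
-- `[κ⁻¹(u−), κ⁻¹(u)]` over jump points `u` of `g`, and on each such interval the linear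
-- interpolation between `(κ⁻¹(u−), g(u−))` and `(κ⁻¹(u), g(u))`.
open scoped Classical in
noncomputable def stilde (g κ : ℝ → ℝ) (s : ℝ) : ℝ :=
  if h : ∃ u : ℝ, JumpAt g u ∧ s ∈ Set.Icc (llim (ginv κ) u) (ginv κ u) then
    let u := Classical.choose h
    llim g u + (g u - llim g u) * (s - llim (ginv κ) u) / (ginv κ u - llim (ginv κ) u)
  else g (κ s)

namespace Aux13

def Sset (h : ℝ → ℝ) (s : ℝ) : Set ℝ := {u : ℝ | 0 < u ∧ s < h u}

lemma ginv_eq (h : ℝ → ℝ) (s : ℝ) : ginv h s = sInf (Sset h s) := rfl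

lemma Sset_bddBelow (h : ℝ → ℝ) (s : ℝ) : BddBelow (Sset h s) := ⟨0, fun _ hx => hx.1.le⟩

lemma ginv_nonneg (h : ℝ → ℝ) (s : ℝ) : 0 ≤ ginv h s :=
  Real.sInf_nonneg fun _ hx => hx.1.le

lemma ginv_le {h : ℝ → ℝ} {s v : ℝ} (hv : v ∈ Sset h s) : ginv h s ≤ v :=
  csInf_le (Sset_bddBelow h s) hv

lemma le_ginv {h : ℝ → ℝ} {s w : ℝ} (hne : (Sset h s).Nonempty)
    (hw : ∀ v ∈ Sset h s, w ≤ v) : w ≤ ginv h s := le_csInf hne hw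

lemma ginv_mono {h : ℝ → ℝ} (hne : ∀ s, (Sset h s).Nonempty) : Monotone (ginv h) := by
  intro s t hst
  exact csInf_le_csInf (Sset_bddBelow h s) (hne t)
    (fun v hv => ⟨hv.1, lt_of_le_of_lt hst hv.2⟩)

lemma Dpp_Sne {h : ℝ → ℝ} (hh : Dpp h) (s : ℝ) : (Sset h s).Nonempty := by
  obtain ⟨t, ht0, htM⟩ := hh.2.2.2.2 (max s 0)
  have htpos : 0 < t := by
    rcases ht0.lt_or_eq with h' | h'
    · exact h'
    · exfalso
      rw [← h', hh.2.2.1] at htM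
      exact absurd htM (not_lt.2 (le_max_right s 0))
  exact ⟨t, htpos, lt_of_le_of_lt (le_max_left s 0) htM⟩

lemma le_comp {h : ℝ → ℝ} (hrc : RightCts h) (hne : ∀ s, (Sset h s).Nonempty)
    {s : ℝ} (hs : 0 ≤ s) : s ≤ h (ginv h s) := by
  by_contra hcon
  push_neg at hcon
  have hG0 : 0 ≤ ginv h s := ginv_nonneg h s
  have hev : ∀ᶠ v in 𝓝[Set.Ici (ginv h s)] (ginv h s), h v < s :=
    (hrc _ hG0).eventually_lt_const hcon
  obtain ⟨x', hx', hsub⟩ := mem_nhdsGE_iff_exists_Ico_subset.1 hev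
  obtain ⟨w, hwS, hwx⟩ := exists_lt_of_csInf_lt (hne s) hx'
  have hw1 : ginv h s ≤ w := ginv_le hwS
  have : h w < s := hsub ⟨hw1, hwx⟩
  exact absurd hwS.2 (not_lt.2 this.le)

lemma llim_comp_le {h : ℝ → ℝ} (h0 : h 0 = 0) {s : ℝ} (hs : 0 ≤ s) :
    llim h (ginv h s) ≤ s := by
  rw [llim]
  split_ifs with hG
  · rw [h0]; exact hs
  · push_neg at hG
    refine csSup_le ⟨h 0, ⟨0, ⟨le_refl 0, hG⟩, rfl⟩⟩ ?_
    rintro y ⟨w, ⟨hw0, hwG⟩, rfl⟩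
    rcases hw0.lt_or_eq with h' | h'
    · by_contra hy
      push_neg at hy
      exact absurd (ginv_le ⟨h', hy⟩) (not_le.2 hwG)
    · rw [← h', h0]; exact hs

lemma ginv_zero {h : ℝ → ℝ} (hpos : ∀ t, 0 < t → 0 < h t) : ginv h 0 = 0 := by
  have hS : Sset h 0 = Set.Ioi 0 := by
    ext x
    exact ⟨fun hx => hx.1, fun hx => ⟨hx, hpos x hx⟩⟩
  rw [ginv_eq, hS, csInf_Ioi]

lemma Sne_ginv {h : ℝ → ℝ} (hmono : MonotoneOn h (Set.Ici 0)) (h0 : h 0 = 0)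
    (hne : ∀ s, (Sset h s).Nonempty) (s : ℝ) : (Sset (ginv h) s).Nonempty := by
  set w := max s 0 + 1 with hw
  have hw0 : 0 < w := lt_of_le_of_lt (le_max_right s 0) (lt_add_one _)
  have hhw : 0 ≤ h w := by
    have := hmono (Set.mem_Ici.2 (le_refl 0)) (Set.mem_Ici.2 hw0.le) hw0.le
    rwa [h0] at this
  refine ⟨h w + 1, by linarith, ?_⟩
  have h1 : w ≤ ginv h (h w + 1) := by
    apply le_ginv (hne _)
    rintro v ⟨hv0, hv⟩
    by_contra hcon
    push_neg at hcon
    have : h v ≤ h w := hmono (Set.mem_Ici.2 hv0.le) (Set.mem_Ici.2 hw0.le) hcon.le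
    linarith
  have : s < w := lt_of_le_of_lt (le_max_left s 0) (lt_add_one _)
  linarith

lemma ginv_ginv {h : ℝ → ℝ} (hmono : Monotone h) (hrc : RightCts h) (h0 : h 0 = 0)
    (hne : ∀ s, (Sset h s).Nonempty) (hne2 : ∀ s, (Sset (ginv h) s).Nonempty)
    {t : ℝ} (ht : 0 ≤ t) : ginv (ginv h) t = h t := by
  have hht : 0 ≤ h t := h0 ▸ hmono ht
  apply le_antisymm
  · by_contra hcon
    push_neg at hcon
    set w := (h t + ginv (ginv h) t) / 2 with hwdef
    have hw1 : h t < w := by rw [hwdef]; linarith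
    have hw2 : w < ginv (ginv h) t := by rw [hwdef]; linarith
    have hwpos : 0 < w := lt_of_le_of_lt hht hw1
    have hkey : t < ginv h w := by
      have hev : ∀ᶠ v in 𝓝[Set.Ici t] t, h v < w := (hrc t ht).eventually_lt_const hw1
      obtain ⟨x', hx', hsub⟩ := mem_nhdsGE_iff_exists_Ico_subset.1 hev
      refine lt_of_lt_of_le hx' (le_ginv (hne w) ?_)
      rintro v ⟨hv0, hvw⟩
      by_contra hvx
      push_neg at hvx
      rcases le_or_gt t v with h' | h'
      · exact absurd (hsub ⟨h', hvx⟩) (not_lt.2 hvw.le)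
      · have : h v ≤ h t := hmono h'.le
        linarith
    exact absurd (ginv_le ⟨hwpos, hkey⟩) (not_le.2 hw2)
  · apply le_ginv (hne2 t)
    rintro v ⟨hv0, hvκ⟩
    by_contra hcon
    push_neg at hcon
    have ht0 : 0 < t := by
      rcases ht.lt_or_eq with h' | h'
      · exact h'
      · exfalso; rw [← h', h0] at hcon; linarith
    exact absurd (ginv_le ⟨ht0, hcon⟩) (not_le.2 hvκ)

lemma ginv_rightCts {h : ℝ → ℝ} (hne : ∀ s, (Sset h s).Nonempty) : RightCts (ginv h) := by
  intro x _
  rw [ContinuousWithinAt]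
  apply tendsto_order.2
  constructor
  · intro l hl
    filter_upwards [self_mem_nhdsWithin] with v hv
    exact lt_of_lt_of_le hl (ginv_mono hne hv)
  · intro U hU
    obtain ⟨w, ⟨hw0, hwx⟩, hwU⟩ := exists_lt_of_csInf_lt (hne x) hU
    have hx' : x < (x + h w) / 2 := by linarith
    filter_upwards [Ico_mem_nhdsGE_of_mem (⟨le_refl x, hx'⟩ : x ∈ Set.Ico x ((x + h w) / 2))]
      with v hv
    calc ginv h v ≤ w := ginv_le ⟨hw0, by linarith [hv.2]⟩
      _ < U := hwU

lemma llim_le_self {h : ℝ → ℝ} (hmono : Monotone h) {u : ℝ} (hu : 0 ≤ u) :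
    llim h u ≤ h u := by
  rw [llim]
  split_ifs with h'
  · exact hmono hu
  · push_neg at h'
    refine csSup_le ⟨h 0, ⟨0, ⟨le_rfl, h'⟩, rfl⟩⟩ ?_
    rintro y ⟨w, hw, rfl⟩
    exact hmono hw.2.le

end Aux13

open Topology in
/-- `κ(s) ∈ [gᵢ(γᵢ(s)−), gᵢ(γᵢ(s))]` for all `i`; if each `gᵢ` is continuous at
`γᵢ(s)` then all `gᵢ(γᵢ(s))` coincide with `κ(s)`. -/
theorem stmt13 (m : ℕ) (g : Fin m → ℝ → ℝ) (hg : ∀ i, Dpp (g i))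
    (f κ : ℝ → ℝ) (γ : Fin m → ℝ → ℝ)
    (hf : f = fun s => ∑ j, ginv (g j) s) (hκ : κ = ginv f)
    (hγ : ∀ i, γ i = stilde (ginv (g i)) κ) :
    ∀ s : ℝ, 0 ≤ s →
      (∀ i, κ s ∈ Set.Icc (llim (g i) (γ i s)) (g i (γ i s))) ∧
      ((∀ i, llim (g i) (γ i s) = g i (γ i s)) → ∀ i, g i (γ i s) = κ s) := by
  intro s hs
  have key : ∀ i, κ s ∈ Set.Icc (llim (g i) (γ i s)) (g i (γ i s)) := by
    intro i
    rw [hγ i]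
    obtain ⟨hmono, hrc, h0, hpos, _⟩ := hg i
    have hSne : ∀ t, (Aux13.Sset (g i) t).Nonempty := Aux13.Dpp_Sne (hg i)
    -- facts about f
    have hFmono : Monotone f := by
      rw [hf]
      intro a b hab
      exact Finset.sum_le_sum fun j _ => Aux13.ginv_mono (Aux13.Dpp_Sne (hg j)) hab
    have hF0 : f 0 = 0 := by
      rw [hf]
      exact Finset.sum_eq_zero fun j _ => Aux13.ginv_zero (hg j).2.2.2.1
    have hFrc : RightCts f := by
      intro x hx
      rw [hf]
      exact tendsto_finset_sum _ fun j _ => Aux13.ginv_rightCts (Aux13.Dpp_Sne (hg j)) x hx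
    have hFSne : ∀ t, (Aux13.Sset f t).Nonempty := by
      intro t
      obtain ⟨v, hv0, hv⟩ := Aux13.Sne_ginv hmono h0 hSne t
      refine ⟨v, hv0, lt_of_lt_of_le hv ?_⟩
      rw [hf]
      exact Finset.single_le_sum (fun j _ => Aux13.ginv_nonneg _ _) (Finset.mem_univ i)
    have hKSne : ∀ t, (Aux13.Sset (ginv f) t).Nonempty :=
      Aux13.Sne_ginv (hFmono.monotoneOn _) hF0 hFSne
    have hinv : ∀ t, 0 ≤ t → ginv κ t = f t := by
      intro t ht
      rw [hκ]
      exact Aux13.ginv_ginv hFmono hFrc hF0 hFSne hKSne ht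
    have hKnonneg : 0 ≤ κ s := by rw [hκ]; exact Aux13.ginv_nonneg _ _
    by_cases H : ∃ u : ℝ, JumpAt (ginv (g i)) u ∧ s ∈ Set.Icc (llim (ginv κ) u) (ginv κ u)
    · -- jump case
      have hγval : stilde (ginv (g i)) κ s =
          llim (ginv (g i)) (Classical.choose H) +
            (ginv (g i) (Classical.choose H) - llim (ginv (g i)) (Classical.choose H)) *
              (s - llim (ginv κ) (Classical.choose H)) /
              (ginv κ (Classical.choose H) - llim (ginv κ) (Classical.choose H)) := by
        rw [stilde, dif_pos H]
      rw [hγval]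
      obtain ⟨hjump, hmem⟩ := Classical.choose_spec H
      set u := Classical.choose H with hudef
      rw [JumpAt] at hjump
      have hGmono : Monotone (ginv (g i)) := Aux13.ginv_mono hSne
      have hu0 : 0 < u := by
        by_contra hcon
        push_neg at hcon
        rw [llim, if_pos hcon] at hjump
        exact absurd (hGmono hcon) (not_le.2 hjump)
      set c := llim (ginv (g i)) u with hcdef
      set Gu := ginv (g i) u with hGudef
      have hcs : c = sSup ((ginv (g i)) '' Set.Ico 0 u) := by
        rw [hcdef, llim, if_neg (not_le.2 hu0)]
      have himgbdd : BddAbove ((ginv (g i)) '' Set.Ico 0 u) := by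
        refine ⟨Gu, ?_⟩
        rintro y ⟨w, hw, rfl⟩
        exact hGmono hw.2.le
      have hc0 : 0 ≤ c := by
        rw [hcs]
        exact le_trans (Aux13.ginv_nonneg _ _) (le_csSup himgbdd ⟨0, ⟨le_rfl, hu0⟩, rfl⟩)
      have hcG : c < Gu := hjump
      have hGu0 : 0 < Gu := lt_of_le_of_lt hc0 hcG
      have hmono' : ∀ {a b : ℝ}, 0 ≤ a → a ≤ b → g i a ≤ g i b := fun ha hab =>
        hmono (Set.mem_Ici.2 ha) (Set.mem_Ici.2 (ha.trans hab)) hab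
      -- g i is flat equal to u on (c, Gu)
      have hflat : ∀ v, c < v → v < Gu → g i v = u := by
        intro v h1 h2
        have hv0 : 0 < v := lt_of_le_of_lt hc0 h1
        have hle : g i v ≤ u := by
          by_contra hcon
          push_neg at hcon
          exact absurd (Aux13.ginv_le ⟨hv0, hcon⟩) (not_le.2 h2)
        rcases hle.lt_or_eq with hlt | heq
        · exfalso
          have hru : max (g i v) 0 < u := max_lt hlt hu0
          have hginvr : ginv (g i) (max (g i v) 0) ≤ c := by
            rw [hcs]
            exact le_csSup himgbdd ⟨max (g i v) 0, ⟨le_max_right _ _, hru⟩, rfl⟩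
          obtain ⟨w, ⟨hw0, hwr⟩, hwv⟩ :=
            exists_lt_of_csInf_lt (hSne (max (g i v) 0)) (lt_of_le_of_lt hginvr h1)
          have h3 : g i w ≤ g i v := hmono' hw0.le hwv.le
          have h4 : max (g i v) 0 < g i v := lt_of_lt_of_le hwr h3
          exact absurd h4 (not_lt.2 (le_max_left _ _))
        · exact heq
      have hgc : g i c = u := by
        have h1 : Filter.Tendsto (g i) (𝓝[>] c) (𝓝 (g i c)) :=
          (hrc c hc0).mono_left (nhdsWithin_mono c Set.Ioi_subset_Ici_self)
        have h2 : Filter.Tendsto (g i) (𝓝[>] c) (𝓝 u) := by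
          apply Filter.Tendsto.congr' _ tendsto_const_nhds
          filter_upwards [Ioo_mem_nhdsGT_of_mem (⟨le_rfl, hcG⟩ : c ∈ Set.Ico c Gu)] with v hv
          exact (hflat v hv.1 hv.2).symm
        exact (tendsto_nhds_unique h2 h1).symm
      have hflat' : ∀ v, c ≤ v → v < Gu → g i v = u := by
        intro v h1 h2
        rcases h1.lt_or_eq with h' | h'
        · exact hflat v h' h2
        · rw [← h']; exact hgc
      have hllimGu : ∀ x, x ≤ Gu → llim (g i) x ≤ u := by
        intro x hxG
        rw [llim]
        split_ifs with hx
        · rw [h0]; exact hu0.le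
        · push_neg at hx
          refine csSup_le ⟨g i 0, ⟨0, ⟨le_rfl, hx⟩, rfl⟩⟩ ?_
          rintro y ⟨w, ⟨hw0, hwx⟩, rfl⟩
          have hwGu : w < Gu := lt_of_lt_of_le hwx hxG
          rcases le_or_gt w c with h' | h'
          · exact le_trans (hmono' hw0 h') hgc.le
          · exact (hflat w h' hwGu).le
      have hllimGuEq : llim (g i) Gu = u := by
        refine le_antisymm (hllimGu Gu le_rfl) ?_
        rw [llim, if_neg (not_le.2 hGu0)]
        refine le_csSup ⟨g i Gu, ?_⟩ ⟨c, ⟨hc0, hcG⟩, hgc⟩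
        rintro y ⟨w, hw, rfl⟩
        exact hmono' hw.1 hw.2.le
      -- rewrite a and b in terms of f
      have hbval : ginv κ u = f u := hinv u hu0.le
      have haval : llim (ginv κ) u = llim f u := by
        rw [llim, llim, if_neg (not_le.2 hu0), if_neg (not_le.2 hu0)]
        congr 1
        exact Set.image_congr fun x hx => hinv x hx.1
      rw [hbval, haval] at hmem ⊢
      obtain ⟨hsa, hsb⟩ := hmem
      have hFimgbdd : BddAbove (f '' Set.Ico 0 u) := by
        refine ⟨f u, ?_⟩
        rintro y ⟨w, hw, rfl⟩
        exact hFmono hw.2.le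
      have hllimF : llim f u = sSup (f '' Set.Ico 0 u) := by
        rw [llim, if_neg (not_le.2 hu0)]
      have hab : llim f u < f u := by
        rw [hllimF]
        refine lt_of_le_of_lt (b := ∑ j, llim (ginv (g j)) u) ?_ ?_
        · refine csSup_le ⟨f 0, ⟨0, ⟨le_rfl, hu0⟩, rfl⟩⟩ ?_
          rintro y ⟨w, hw, rfl⟩
          rw [hf]
          refine Finset.sum_le_sum fun j _ => ?_
          rw [llim, if_neg (not_le.2 hu0)]
          refine le_csSup ⟨ginv (g j) u, ?_⟩ ⟨w, hw, rfl⟩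
          rintro y ⟨w', hw', rfl⟩
          exact Aux13.ginv_mono (Aux13.Dpp_Sne (hg j)) hw'.2.le
        · rw [hf]
          refine Finset.sum_lt_sum (fun j _ => Aux13.llim_le_self
            (Aux13.ginv_mono (Aux13.Dpp_Sne (hg j))) hu0.le) ⟨i, Finset.mem_univ i, hjump⟩
      -- κ s bounds
      have hKgeu : u ≤ κ s := by
        rw [hκ]
        refine Aux13.le_ginv (hFSne s) ?_
        rintro v ⟨hv0, hv⟩
        by_contra hcon
        push_neg at hcon
        have : f v ≤ llim f u := by
          rw [hllimF]
          exact le_csSup hFimgbdd ⟨v, ⟨hv0.le, hcon⟩, rfl⟩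
        linarith
      have hKleu : s < f u → κ s ≤ u := by
        intro hsb'
        rw [hκ]
        by_contra hcon
        push_neg at hcon
        have hv : (u + ginv f s) / 2 ∈ Aux13.Sset f s :=
          ⟨by linarith, lt_of_lt_of_le hsb' (hFmono (by linarith))⟩
        have h5 := Aux13.ginv_le hv
        linarith
      rcases hsb.lt_or_eq with hlt | heq
      · -- s < f u : κ s = u, γ lands in [c, Gu)
        have hKeq : κ s = u := le_antisymm (hKleu hlt) hKgeu
        have hne00 : (0:ℝ) < f u - llim f u := by linarith
        have hρ0 : 0 ≤ (Gu - c) * (s - llim f u) / (f u - llim f u) :=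
          div_nonneg (mul_nonneg (by linarith) (by linarith)) hne00.le
        have hρ1 : (Gu - c) * (s - llim f u) / (f u - llim f u) < Gu - c := by
          rw [div_lt_iff₀ hne00]
          have h6 : s - llim f u < f u - llim f u := by linarith
          nlinarith
        have h1 : c ≤ c + (Gu - c) * (s - llim f u) / (f u - llim f u) := by linarith
        have h2 : c + (Gu - c) * (s - llim f u) / (f u - llim f u) < Gu := by linarith
        constructor
        · rw [hKeq]
          exact hllimGu _ h2.le
        · rw [hflat' _ h1 h2, hKeq]
      · -- s = f u : γ = Gu
        have hBA : f u - llim f u ≠ 0 := by linarith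
        have hγGu : c + (Gu - c) * (s - llim f u) / (f u - llim f u) = Gu := by
          rw [heq, mul_div_assoc, div_self hBA, mul_one]
          ring
        rw [hγGu]
        refine ⟨?_, ?_⟩
        · rw [hllimGuEq]; exact hKgeu
        · -- κ s ≤ g i Gu
          by_contra hcon
          push_neg at hcon
          have hgGu_u : u ≤ g i Gu := Aux13.le_comp hrc hSne hu0.le
          set v := (g i Gu + κ s) / 2 with hvdef
          have hv1 : g i Gu < v := by rw [hvdef]; linarith
          have hv2 : v < κ s := by rw [hvdef]; linarith
          have hGuv : Gu < ginv (g i) v := by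
            have hev : ∀ᶠ w in 𝓝[Set.Ici Gu] Gu, g i w < v :=
              (hrc Gu hGu0.le).eventually_lt_const hv1
            obtain ⟨x', hx', hsub⟩ := mem_nhdsGE_iff_exists_Ico_subset.1 hev
            refine lt_of_lt_of_le hx' (Aux13.le_ginv (hSne v) ?_)
            rintro w ⟨hw0, hwv⟩
            by_contra hcon2
            push_neg at hcon2
            rcases le_or_gt Gu w with h'' | h''
            · exact absurd (hsub ⟨h'', hcon2⟩) (not_lt.2 hwv.le)
            · have : g i w ≤ g i Gu := hmono' hw0.le h''.le
              linarith
          have hfv : f u < f v := by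
            rw [hf]
            refine Finset.sum_lt_sum (fun j _ => Aux13.ginv_mono (Aux13.Dpp_Sne (hg j))
              (by linarith : u ≤ v)) ⟨i, Finset.mem_univ i, hGuv⟩
          have hvS : v ∈ Aux13.Sset f s := ⟨by linarith, by rw [heq]; exact hfv⟩
          have h7 : κ s ≤ v := by rw [hκ]; exact Aux13.ginv_le hvS
          linarith
    · rw [stilde, dif_neg H]
      exact ⟨Aux13.llim_comp_le h0 hKnonneg, Aux13.le_comp hrc hSne hKnonneg⟩
  refine ⟨key, fun hc i => le_antisymm ((hc i).symm.trans_le (key i).1) (key i).2⟩
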